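/- arXiv:1111.4256 — 6 statements merged into one kernel-verified Lean document; each statement's English description precedes it below -/
import Mathlib

section
/- Let p, e, s : (0,∞)² → ℝ with e and s twice continuously differentiable, satisfying Gibbs' equation on (0,∞)². Fix Θ > 0 and define H_Θ(ϱ,ϑ) = ϱ·e(ϱ,ϑ) − Θ·ϱ·s(ϱ,ϑ). Then the mixed second derivative of H_Θ vanishes on the slice ϑ = Θ: for every ϱ > 0, ∂_ϑ (∂_ϱ H_Θ)(ϱ,Θ) = 0. -/
/-- Under Gibbs' equation (with `e, s` twice continuously
differentiable), the mixed second derivative of the ballistic free energy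
`H_Θ(ϱ,ϑ) = ϱ·e(ϱ,ϑ) − Θ·ϱ·s(ϱ,ϑ)` vanishes on the slice `ϑ = Θ`:
`∂_ϑ (∂_ϱ H_Θ)(ϱ,Θ) = 0` for every `ϱ > 0`. -/
theorem ballistic_free_energy_mixed_derivative_vanishes
    (p e s : ℝ → ℝ → ℝ)
    (he : ContDiffOn ℝ 2 (fun q : ℝ × ℝ => e q.1 q.2)
      (Set.Ioi (0 : ℝ) ×ˢ Set.Ioi (0 : ℝ)))
    (hs : ContDiffOn ℝ 2 (fun q : ℝ × ℝ => s q.1 q.2)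
      (Set.Ioi (0 : ℝ) ×ˢ Set.Ioi (0 : ℝ)))
    (gibbs_temp : ∀ ϱ ϑ : ℝ, 0 < ϱ → 0 < ϑ →
      ϑ * deriv (fun t => s ϱ t) ϑ = deriv (fun t => e ϱ t) ϑ)
    (gibbs_dens : ∀ ϱ ϑ : ℝ, 0 < ϱ → 0 < ϑ →
      ϑ * deriv (fun r => s r ϑ) ϱ
        = deriv (fun r => e r ϑ) ϱ - p ϱ ϑ / ϱ ^ 2)
    (Θ : ℝ) (hΘ : 0 < Θ) :
    ∀ ϱ : ℝ, 0 < ϱ →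
      deriv (fun t => deriv (fun x => x * e x t - Θ * (x * s x t)) ϱ) Θ = 0 := by
  intro ϱ hϱ
  set U : Set (ℝ × ℝ) := Set.Ioi (0 : ℝ) ×ˢ Set.Ioi (0 : ℝ) with hUdef
  have hUopen : IsOpen U := isOpen_Ioi.prod isOpen_Ioi
  set F : ℝ × ℝ → ℝ := fun q => q.1 * e q.1 q.2 - Θ * (q.1 * s q.1 q.2) with hFdef
  have hF : ContDiffOn ℝ 2 F U := by
    exact (contDiff_fst.contDiffOn.mul he).sub
      (contDiffOn_const.mul (contDiff_fst.contDiffOn.mul hs))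
  have hFat : ∀ q : ℝ × ℝ, q ∈ U → ContDiffAt ℝ 2 F q := fun q hq =>
    hF.contDiffAt (hUopen.mem_nhds hq)
  have hF' : ContDiffOn ℝ 1 (fderiv ℝ F) U :=
    hF.fderiv_of_isOpen hUopen (by norm_num)
  -- the curve x ↦ (x, t) and t ↦ (x, t)
  have hcurve1 : ∀ (x t : ℝ), HasDerivAt (fun y : ℝ => (y, t)) ((1 : ℝ), (0 : ℝ)) x :=
    fun x t => (hasDerivAt_id x).prodMk (hasDerivAt_const x t)
  have hcurve2 : ∀ (x t : ℝ), HasDerivAt (fun u : ℝ => (x, u)) ((0 : ℝ), (1 : ℝ)) t :=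
    fun x t => (hasDerivAt_const t x).prodMk (hasDerivAt_id t)
  -- partial derivative in the first variable, inside U
  have hpart1 : ∀ q : ℝ × ℝ, q ∈ U →
      HasDerivAt (fun y : ℝ => F (y, q.2)) (fderiv ℝ F q ((1 : ℝ), (0 : ℝ))) q.1 := by
    intro q hq
    have hd : DifferentiableAt ℝ F q := (hFat q hq).differentiableAt (by norm_num)
    have := hd.hasFDerivAt.comp_hasDerivAt q.1 (hcurve1 q.1 q.2)
    exact this
  -- partial derivative in the second variable, inside U
  have hpart2 : ∀ q : ℝ × ℝ, q ∈ U →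
      HasDerivAt (fun u : ℝ => F (q.1, u)) (fderiv ℝ F q ((0 : ℝ), (1 : ℝ))) q.2 := by
    intro q hq
    have hd : DifferentiableAt ℝ F q := (hFat q hq).differentiableAt (by norm_num)
    have := hd.hasFDerivAt.comp_hasDerivAt q.2 (hcurve2 q.1 q.2)
    exact this
  -- the second-variable partial derivative of F vanishes on the slice ϑ = Θ
  have hslice : ∀ x : ℝ, 0 < x → fderiv ℝ F (x, Θ) ((0 : ℝ), (1 : ℝ)) = 0 := by
    intro x hx
    have hxU : ((x, Θ) : ℝ × ℝ) ∈ U := ⟨hx, hΘ⟩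
    -- differentiability of t ↦ e x t and t ↦ s x t at Θ
    have heD : DifferentiableAt ℝ (fun t => e x t) Θ := by
      have : DifferentiableAt ℝ (fun q : ℝ × ℝ => e q.1 q.2) (x, Θ) :=
        (he.contDiffAt (hUopen.mem_nhds hxU)).differentiableAt (by norm_num)
      exact this.comp Θ ((differentiableAt_const x).prodMk differentiableAt_id)
    have hsD : DifferentiableAt ℝ (fun t => s x t) Θ := by
      have : DifferentiableAt ℝ (fun q : ℝ × ℝ => s q.1 q.2) (x, Θ) :=
        (hs.contDiffAt (hUopen.mem_nhds hxU)).differentiableAt (by norm_num)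
      exact this.comp Θ ((differentiableAt_const x).prodMk differentiableAt_id)
    have h1 : HasDerivAt (fun u : ℝ => F (x, u))
        (x * deriv (fun t => e x t) Θ - Θ * (x * deriv (fun t => s x t) Θ)) Θ := by
      exact
        ((heD.hasDerivAt.const_mul x).sub ((hsD.hasDerivAt.const_mul x).const_mul Θ))
    have h2 := hpart2 (x, Θ) hxU
    have : fderiv ℝ F (x, Θ) ((0 : ℝ), (1 : ℝ))
        = x * deriv (fun t => e x t) Θ - Θ * (x * deriv (fun t => s x t) Θ) :=
      h2.unique h1
    rw [this, ← gibbs_temp x Θ hx hΘ]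
    ring
  -- main computation: derivative at Θ of t ↦ fderiv F (ϱ,t) (1,0)
  have hρΘU : ((ϱ, Θ) : ℝ × ℝ) ∈ U := ⟨hϱ, hΘ⟩
  have hF'd : DifferentiableAt ℝ (fderiv ℝ F) (ϱ, Θ) :=
    (hF'.contDiffAt (hUopen.mem_nhds hρΘU)).differentiableAt (by norm_num)
  have hB : HasDerivAt (fun t : ℝ => fderiv ℝ F (ϱ, t) ((1 : ℝ), (0 : ℝ)))
      (fderiv ℝ (fderiv ℝ F) (ϱ, Θ) ((0 : ℝ), (1 : ℝ)) ((1 : ℝ), (0 : ℝ))) Θ := by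
    have hc : HasDerivAt (fun t : ℝ => fderiv ℝ F (ϱ, t))
        (fderiv ℝ (fderiv ℝ F) (ϱ, Θ) ((0 : ℝ), (1 : ℝ))) Θ := by
      exact hF'd.hasFDerivAt.comp_hasDerivAt Θ (hcurve2 ϱ Θ)
    simpa using hc.clm_apply (hasDerivAt_const Θ ((1 : ℝ), (0 : ℝ)))
  -- symmetry of the second derivative
  have hsymm : fderiv ℝ (fderiv ℝ F) (ϱ, Θ) ((0 : ℝ), (1 : ℝ)) ((1 : ℝ), (0 : ℝ))
      = fderiv ℝ (fderiv ℝ F) (ϱ, Θ) ((1 : ℝ), (0 : ℝ)) ((0 : ℝ), (1 : ℝ)) :=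
    ((hFat (ϱ, Θ) hρΘU).isSymmSndFDerivAt (by norm_num)) _ _
  -- derivative in x of x ↦ fderiv F (x,Θ) (0,1)
  have hC : HasDerivAt (fun x : ℝ => fderiv ℝ F (x, Θ) ((0 : ℝ), (1 : ℝ)))
      (fderiv ℝ (fderiv ℝ F) (ϱ, Θ) ((1 : ℝ), (0 : ℝ)) ((0 : ℝ), (1 : ℝ))) ϱ := by
    have hc : HasDerivAt (fun x : ℝ => fderiv ℝ F (x, Θ))
        (fderiv ℝ (fderiv ℝ F) (ϱ, Θ) ((1 : ℝ), (0 : ℝ))) ϱ := by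
      exact hF'd.hasFDerivAt.comp_hasDerivAt ϱ (hcurve1 ϱ Θ)
    simpa using hc.clm_apply (hasDerivAt_const ϱ ((0 : ℝ), (1 : ℝ)))
  -- but x ↦ fderiv F (x,Θ) (0,1) is eventually 0 near ϱ, so hC's derivative is 0
  have hzero : fderiv ℝ (fderiv ℝ F) (ϱ, Θ) ((1 : ℝ), (0 : ℝ)) ((0 : ℝ), (1 : ℝ)) = 0 := by
    have hev : (fun x : ℝ => fderiv ℝ F (x, Θ) ((0 : ℝ), (1 : ℝ))) =ᶠ[nhds ϱ]
        (fun _ => (0 : ℝ)) := by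
      filter_upwards [Ioi_mem_nhds hϱ] with x hx
      exact hslice x hx
    have := hC.deriv
    rw [hev.deriv_eq] at this
    simpa [deriv_const] using this.symm
  -- the target function eventually equals t ↦ fderiv F (ϱ,t) (1,0) near Θ
  have hev2 : (fun t : ℝ => deriv (fun x => x * e x t - Θ * (x * s x t)) ϱ) =ᶠ[nhds Θ]
      (fun t : ℝ => fderiv ℝ F (ϱ, t) ((1 : ℝ), (0 : ℝ))) := by
    filter_upwards [Ioi_mem_nhds hΘ] with t ht
    have := (hpart1 (ϱ, t) ⟨hϱ, ht⟩).deriv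
    simpa [hFdef] using this
  rw [hev2.deriv_eq, hB.deriv, hsymm, hzero]
end

section
/- Let p, e, s : (0,∞)² → ℝ with e and s twice continuously differentiable and p continuously differentiable, satisfying Gibbs' equation on (0,∞)². Fix Θ > 0, define H_Θ(ϱ,ϑ) = ϱ·e(ϱ,ϑ) − Θ·ϱ·s(ϱ,ϑ), and assume ∂_ϱ p(ϱ,Θ) > 0 for all ϱ > 0. Then the function ϱ ↦ H_Θ(ϱ,Θ) is strictly convex on (0,∞). -/
lemma slice_contDiffAt {f : ℝ → ℝ → ℝ} {n : ℕ∞}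
    (hf : ContDiffOn ℝ n (fun q : ℝ × ℝ => f q.1 q.2)
      (Set.Ioi (0 : ℝ) ×ˢ Set.Ioi (0 : ℝ)))
    {Θ x : ℝ} (hΘ : 0 < Θ) (hx : 0 < x) :
    ContDiffAt ℝ n (fun r => f r Θ) x := by
  have h1 : ContDiffAt ℝ n (fun q : ℝ × ℝ => f q.1 q.2) (x, Θ) :=
    hf.contDiffAt (((isOpen_Ioi.prod isOpen_Ioi).mem_nhds ⟨hx, hΘ⟩))
  exact h1.comp x (contDiffAt_id.prodMk contDiffAt_const)

/-- Under Gibbs' equation (with `e, s` twice continuously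
differentiable and `p` continuously differentiable) and the first thermodynamic
stability condition `∂_ϱ p(ϱ,Θ) > 0`, the map `ϱ ↦ H_Θ(ϱ,Θ)` is strictly convex
on `(0,∞)`, where `H_Θ(ϱ,ϑ) = ϱ·e(ϱ,ϑ) − Θ·ϱ·s(ϱ,ϑ)`. -/
theorem ballistic_free_energy_strictConvexOn
    (p e s : ℝ → ℝ → ℝ)
    (hp : ContDiffOn ℝ 1 (fun q : ℝ × ℝ => p q.1 q.2)
      (Set.Ioi (0 : ℝ) ×ˢ Set.Ioi (0 : ℝ)))
    (he : ContDiffOn ℝ 2 (fun q : ℝ × ℝ => e q.1 q.2)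
      (Set.Ioi (0 : ℝ) ×ˢ Set.Ioi (0 : ℝ)))
    (hs : ContDiffOn ℝ 2 (fun q : ℝ × ℝ => s q.1 q.2)
      (Set.Ioi (0 : ℝ) ×ˢ Set.Ioi (0 : ℝ)))
    (gibbs_temp : ∀ ϱ ϑ : ℝ, 0 < ϱ → 0 < ϑ →
      ϑ * deriv (fun t => s ϱ t) ϑ = deriv (fun t => e ϱ t) ϑ)
    (gibbs_dens : ∀ ϱ ϑ : ℝ, 0 < ϱ → 0 < ϑ →
      ϑ * deriv (fun r => s r ϑ) ϱ
        = deriv (fun r => e r ϑ) ϱ - p ϱ ϑ / ϱ ^ 2)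
    (Θ : ℝ) (hΘ : 0 < Θ)
    (hstab : ∀ ϱ : ℝ, 0 < ϱ → 0 < deriv (fun r => p r Θ) ϱ) :
    StrictConvexOn ℝ (Set.Ioi (0 : ℝ))
      (fun ϱ : ℝ => ϱ * e ϱ Θ - Θ * (ϱ * s ϱ Θ)) := by
  set g : ℝ → ℝ := fun r => e r Θ with hg_def
  set h : ℝ → ℝ := fun r => s r Θ with hh_def
  set P : ℝ → ℝ := fun r => p r Θ with hP_def
  set F : ℝ → ℝ := fun ϱ => ϱ * g ϱ - Θ * (ϱ * h ϱ) with hF_def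
  -- differentiability of slices
  have hg : ∀ x : ℝ, 0 < x → DifferentiableAt ℝ g x := fun x hx =>
    (slice_contDiffAt he hΘ hx).differentiableAt (by norm_num)
  have hh : ∀ x : ℝ, 0 < x → DifferentiableAt ℝ h x := fun x hx =>
    (slice_contDiffAt hs hΘ hx).differentiableAt (by norm_num)
  have hP : ∀ x : ℝ, 0 < x → DifferentiableAt ℝ P x := fun x hx =>
    (slice_contDiffAt hp hΘ hx).differentiableAt (by norm_num)
  -- the Gibbs relation for the slices
  have gibbs : ∀ x : ℝ, 0 < x →
      Θ * deriv h x = deriv g x - P x / x ^ 2 := fun x hx =>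
    gibbs_dens x Θ hx hΘ
  -- first derivative of F
  have hF' : ∀ x : ℝ, 0 < x →
      HasDerivAt F (g x - Θ * h x + P x / x) x := by
    intro x hx
    have h1 : HasDerivAt (fun y => y * g y) (1 * g x + x * deriv g x) x :=
      (hasDerivAt_id x).mul (hg x hx).hasDerivAt
    have h2 : HasDerivAt (fun y => y * h y) (1 * h x + x * deriv h x) x :=
      (hasDerivAt_id x).mul (hh x hx).hasDerivAt
    have h3 := h1.sub (h2.const_mul Θ)
    have key : deriv g x - Θ * deriv h x = P x / x ^ 2 := by
      linarith [gibbs x hx]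
    have heq : 1 * g x + x * deriv g x - Θ * (1 * h x + x * deriv h x)
        = g x - Θ * h x + P x / x := by
      have e1 : 1 * g x + x * deriv g x - Θ * (1 * h x + x * deriv h x)
          = g x - Θ * h x + x * (deriv g x - Θ * deriv h x) := by ring
      rw [e1, key]
      field_simp
    rw [heq] at h3
    exact h3
  -- deriv F equals G on Ioi 0
  set G : ℝ → ℝ := fun r => g r - Θ * h r + P r / r with hG_def
  have hderivF : ∀ x ∈ Set.Ioi (0 : ℝ), deriv F x = G x := fun x hx =>
    (hF' x hx).deriv
  -- second derivative
  have hF'' : ∀ x ∈ Set.Ioi (0 : ℝ), 0 < deriv (deriv F) x := by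
    intro x hx
    have hx' : (0 : ℝ) < x := hx
    have hEq : deriv F =ᶠ[nhds x] G := by
      filter_upwards [isOpen_Ioi.mem_nhds hx] with y hy
      exact hderivF y hy
    rw [Filter.EventuallyEq.deriv_eq hEq]
    have hG' : HasDerivAt G
        (deriv g x - Θ * deriv h x + (deriv P x * x - P x * 1) / x ^ 2) x := by
      have h1 := ((hg x hx').hasDerivAt.sub
        ((hh x hx').hasDerivAt.const_mul Θ)).add
        ((hP x hx').hasDerivAt.div (hasDerivAt_id x) hx'.ne')
      exact h1
    rw [hG'.deriv]
    have hgibbs := gibbs x hx'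
    have hstabx := hstab x hx'
    have key : deriv g x - Θ * deriv h x = P x / x ^ 2 := by
      linarith [hgibbs]
    have : deriv g x - Θ * deriv h x + (deriv P x * x - P x * 1) / x ^ 2
        = deriv P x / x := by
      rw [key]
      field_simp
      ring
    rw [this]
    exact div_pos hstabx hx'
  -- continuity of F on Ioi 0
  have hFc : ContinuousOn F (Set.Ioi (0 : ℝ)) := by
    intro x hx
    exact ((hF' x hx).differentiableAt.continuousAt).continuousWithinAt
  exact strictConvexOn_of_deriv2_pos (convex_Ioi (0 : ℝ)) hFc
    (fun x hx => by
      rw [interior_Ioi] at hx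
      simpa [Function.iterate_succ, Function.comp] using hF'' x hx)
end

section
/- Let e, s : (0,∞)² → ℝ be continuously differentiable in the temperature variable, satisfy ϑ·∂_ϑ s(ϱ,ϑ) = ∂_ϑ e(ϱ,ϑ) for all ϱ, ϑ > 0, and suppose ∂_ϑ e(ϱ,ϑ) > 0 for all ϱ, ϑ > 0. Fix Θ > 0 and define H_Θ(ϱ,ϑ) = ϱ·e(ϱ,ϑ) − Θ·ϱ·s(ϱ,ϑ). Then for every ϱ > 0 the function ϑ ↦ H_Θ(ϱ,ϑ) attains its strict global minimum over (0,∞) at ϑ = Θ; that is, H_Θ(ϱ,ϑ) > H_Θ(ϱ,Θ) whenever ϑ > 0 and ϑ ≠ Θ. -/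
/-- If `e, s` are continuously differentiable in the temperature
variable, satisfy the temperature part of Gibbs' equation `ϑ·∂_ϑ s = ∂_ϑ e`, and
`∂_ϑ e > 0` (thermodynamic stability), then for each fixed `Θ > 0` and `ϱ > 0` the
map `ϑ ↦ H_Θ(ϱ,ϑ) = ϱ·e(ϱ,ϑ) − Θ·ϱ·s(ϱ,ϑ)` attains its strict global minimum over
`(0,∞)` at `ϑ = Θ`. -/
theorem ballistic_free_energy_strict_minimum
    (e s : ℝ → ℝ → ℝ)
    (he : ∀ ϱ : ℝ, 0 < ϱ → ContDiffOn ℝ 1 (fun t => e ϱ t) (Set.Ioi (0 : ℝ)))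
    (hs : ∀ ϱ : ℝ, 0 < ϱ → ContDiffOn ℝ 1 (fun t => s ϱ t) (Set.Ioi (0 : ℝ)))
    (gibbs_temp : ∀ ϱ ϑ : ℝ, 0 < ϱ → 0 < ϑ →
      ϑ * deriv (fun t => s ϱ t) ϑ = deriv (fun t => e ϱ t) ϑ)
    (hstab : ∀ ϱ ϑ : ℝ, 0 < ϱ → 0 < ϑ → 0 < deriv (fun t => e ϱ t) ϑ)
    (Θ : ℝ) (hΘ : 0 < Θ) :
    ∀ ϱ ϑ : ℝ, 0 < ϱ → 0 < ϑ → ϑ ≠ Θ →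
      ϱ * e ϱ Θ - Θ * (ϱ * s ϱ Θ) < ϱ * e ϱ ϑ - Θ * (ϱ * s ϱ ϑ) := by
  intro ϱ ϑ hϱ hϑ hne
  set f : ℝ → ℝ := fun t => e ϱ t - Θ * s ϱ t with hf
  have hde : DifferentiableOn ℝ (fun t => e ϱ t) (Set.Ioi (0:ℝ)) :=
    (he ϱ hϱ).differentiableOn one_ne_zero
  have hds : DifferentiableOn ℝ (fun t => s ϱ t) (Set.Ioi (0:ℝ)) :=
    (hs ϱ hϱ).differentiableOn one_ne_zero
  have hdeAt : ∀ t : ℝ, 0 < t → DifferentiableAt ℝ (fun t => e ϱ t) t := fun t ht =>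
    (hde t ht).differentiableAt (isOpen_Ioi.mem_nhds ht)
  have hdsAt : ∀ t : ℝ, 0 < t → DifferentiableAt ℝ (fun t => s ϱ t) t := fun t ht =>
    (hds t ht).differentiableAt (isOpen_Ioi.mem_nhds ht)
  have hdfAt : ∀ t : ℝ, 0 < t → DifferentiableAt ℝ f t := fun t ht =>
    (hdeAt t ht).sub ((hdsAt t ht).const_mul Θ)
  have hderiv : ∀ t : ℝ, 0 < t →
      deriv f t = (t - Θ) * deriv (fun u => s ϱ u) t := by
    intro t ht
    have h1 : deriv f t = deriv (fun u => e ϱ u) t - Θ * deriv (fun u => s ϱ u) t := by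
      rw [hf]
      rw [deriv_fun_sub (hdeAt t ht) ((hdsAt t ht).const_mul Θ), deriv_const_mul Θ (hdsAt t ht)]
    rw [h1, ← gibbs_temp ϱ t hϱ ht]
    ring
  have hspos : ∀ t : ℝ, 0 < t → 0 < deriv (fun u => s ϱ u) t := by
    intro t ht
    have := hstab ϱ t hϱ ht
    rw [← gibbs_temp ϱ t hϱ ht] at this
    rcases mul_pos_iff.mp this with ⟨_, h⟩ | ⟨h, _⟩
    · exact h
    · linarith
  have hcont : ∀ a b : ℝ, 0 < a → ContinuousOn f (Set.Icc a b) := by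
    intro a b ha
    apply ContinuousOn.mono _ (fun x hx => (lt_of_lt_of_le ha hx.1 : (0:ℝ) < x))
    exact fun x hx => ((hdfAt x hx).continuousAt).continuousWithinAt
  have key : f Θ < f ϑ := by
    rcases lt_or_gt_of_ne hne with hlt | hgt
    · -- ϑ < Θ : f strict anti on [ϑ, Θ]
      have : StrictAntiOn f (Set.Icc ϑ Θ) := by
        apply strictAntiOn_of_deriv_neg (convex_Icc ϑ Θ) (hcont ϑ Θ hϑ)
        intro x hx
        rw [interior_Icc] at hx
        have hxpos : 0 < x := lt_trans hϑ hx.1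
        rw [hderiv x hxpos]
        exact mul_neg_of_neg_of_pos (sub_neg.mpr hx.2) (hspos x hxpos)
      exact this (Set.left_mem_Icc.mpr hlt.le) (Set.right_mem_Icc.mpr hlt.le) hlt
    · -- Θ < ϑ : f strict mono on [Θ, ϑ]
      have : StrictMonoOn f (Set.Icc Θ ϑ) := by
        apply strictMonoOn_of_deriv_pos (convex_Icc Θ ϑ) (hcont Θ ϑ hΘ)
        intro x hx
        rw [interior_Icc] at hx
        have hxpos : 0 < x := lt_trans hΘ hx.1
        rw [hderiv x hxpos]
        exact mul_pos (sub_pos.mpr hx.1) (hspos x hxpos)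
      exact this (Set.left_mem_Icc.mpr hgt.le) (Set.right_mem_Icc.mpr hgt.le) hgt
  have := mul_lt_mul_of_pos_left key hϱ
  simp only [hf] at this
  nlinarith [this]
end

section
/- Let p, e, s : (0,∞)² → ℝ with e and s twice continuously differentiable and p continuously differentiable, satisfying Gibbs' equation on (0,∞)², and suppose the thermodynamic stability conditions ∂_ϱ p(ϱ,ϑ) > 0 and ∂_ϑ e(ϱ,ϑ) > 0 hold for all ϱ, ϑ > 0. Define the relative entropy E(ϱ,ϑ | r,Θ) = H_Θ(ϱ,ϑ) − ∂_ϱ H_Θ(r,Θ)·(ϱ − r) − H_Θ(r,Θ), where H_Θ(ϱ,ϑ) = ϱ·e(ϱ,ϑ) − Θ·ϱ·s(ϱ,ϑ). Then for all ϱ, ϑ, r, Θ > 0 one has E(ϱ,ϑ | r,Θ) ≥ 0, with equality if and only if ϱ = r and ϑ = Θ. -/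
lemma slice_fst' {F : ℝ → ℝ → ℝ}
    (hF : ContDiffOn ℝ 1 (fun q : ℝ × ℝ => F q.1 q.2)
      (Set.Ioi (0 : ℝ) ×ˢ Set.Ioi (0 : ℝ)))
    {x y : ℝ} (hx : 0 < x) (hy : 0 < y) :
    DifferentiableAt ℝ (fun r => F r y) x := by
  have hU : IsOpen ((Set.Ioi (0:ℝ)) ×ˢ (Set.Ioi (0:ℝ))) := isOpen_Ioi.prod isOpen_Ioi
  have h1 : DifferentiableAt ℝ (fun q : ℝ × ℝ => F q.1 q.2) (x, y) :=
    (hF.differentiableOn one_ne_zero).differentiableAt (hU.mem_nhds ⟨hx, hy⟩)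
  exact h1.comp x (differentiableAt_id.prodMk (differentiableAt_const y) :
    DifferentiableAt ℝ (fun r : ℝ => (r, y)) x)

lemma slice_snd' {F : ℝ → ℝ → ℝ}
    (hF : ContDiffOn ℝ 1 (fun q : ℝ × ℝ => F q.1 q.2)
      (Set.Ioi (0 : ℝ) ×ˢ Set.Ioi (0 : ℝ)))
    {x y : ℝ} (hx : 0 < x) (hy : 0 < y) :
    DifferentiableAt ℝ (fun t => F x t) y := by
  have hU : IsOpen ((Set.Ioi (0:ℝ)) ×ˢ (Set.Ioi (0:ℝ))) := isOpen_Ioi.prod isOpen_Ioi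
  have h1 : DifferentiableAt ℝ (fun q : ℝ × ℝ => F q.1 q.2) (x, y) :=
    (hF.differentiableOn one_ne_zero).differentiableAt (hU.mem_nhds ⟨hx, hy⟩)
  exact h1.comp y ((differentiableAt_const x).prodMk differentiableAt_id)

/-- Under Gibbs' equation (with `e, s` twice continuously
differentiable and `p` continuously differentiable) and thermodynamic stability
(`∂_ϱ p > 0`, `∂_ϑ e > 0`), the relative entropy
`E(ϱ,ϑ | r,Θ) = H_Θ(ϱ,ϑ) − ∂_ϱ H_Θ(r,Θ)·(ϱ − r) − H_Θ(r,Θ)`, with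
`H_Θ(ϱ,ϑ) = ϱ·e(ϱ,ϑ) − Θ·ϱ·s(ϱ,ϑ)`, is nonnegative for all `ϱ, ϑ, r, Θ > 0`,
and vanishes if and only if `ϱ = r` and `ϑ = Θ`. -/
theorem relative_entropy_nonneg_and_vanishes_iff
    (p e s : ℝ → ℝ → ℝ)
    (hp : ContDiffOn ℝ 1 (fun q : ℝ × ℝ => p q.1 q.2)
      (Set.Ioi (0 : ℝ) ×ˢ Set.Ioi (0 : ℝ)))
    (he : ContDiffOn ℝ 2 (fun q : ℝ × ℝ => e q.1 q.2)
      (Set.Ioi (0 : ℝ) ×ˢ Set.Ioi (0 : ℝ)))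
    (hs : ContDiffOn ℝ 2 (fun q : ℝ × ℝ => s q.1 q.2)
      (Set.Ioi (0 : ℝ) ×ˢ Set.Ioi (0 : ℝ)))
    (gibbs_temp : ∀ ϱ ϑ : ℝ, 0 < ϱ → 0 < ϑ →
      ϑ * deriv (fun t => s ϱ t) ϑ = deriv (fun t => e ϱ t) ϑ)
    (gibbs_dens : ∀ ϱ ϑ : ℝ, 0 < ϱ → 0 < ϑ →
      ϑ * deriv (fun r => s r ϑ) ϱ
        = deriv (fun r => e r ϑ) ϱ - p ϱ ϑ / ϱ ^ 2)
    (hstab_p : ∀ ϱ ϑ : ℝ, 0 < ϱ → 0 < ϑ → 0 < deriv (fun r => p r ϑ) ϱ)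
    (hstab_e : ∀ ϱ ϑ : ℝ, 0 < ϱ → 0 < ϑ → 0 < deriv (fun t => e ϱ t) ϑ) :
    ∀ ϱ ϑ r Θ : ℝ, 0 < ϱ → 0 < ϑ → 0 < r → 0 < Θ →
      0 ≤ (ϱ * e ϱ ϑ - Θ * (ϱ * s ϱ ϑ))
          - deriv (fun x => x * e x Θ - Θ * (x * s x Θ)) r * (ϱ - r)
          - (r * e r Θ - Θ * (r * s r Θ)) ∧
      ((ϱ * e ϱ ϑ - Θ * (ϱ * s ϱ ϑ))
          - deriv (fun x => x * e x Θ - Θ * (x * s x Θ)) r * (ϱ - r)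
          - (r * e r Θ - Θ * (r * s r Θ)) = 0 ↔ ϱ = r ∧ ϑ = Θ) := by
  intro ϱ ϑ r Θ hϱ hϑ hr hΘ
  have he1 := he.of_le one_le_two
  have hs1 := hs.of_le one_le_two
  -- Part A : temperature direction
  have hφ' : ∀ t ∈ Set.Ioi (0:ℝ),
      HasDerivAt (fun t => ϱ * e ϱ t - Θ * (ϱ * s ϱ t))
        (ϱ * deriv (fun u => e ϱ u) t * (t - Θ) / t) t := by
    intro t ht
    have ht0 : (0:ℝ) < t := ht
    have hde : HasDerivAt (fun u => e ϱ u) (deriv (fun u => e ϱ u) t) t :=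
      (slice_snd' he1 hϱ ht0).hasDerivAt
    have hds : HasDerivAt (fun u => s ϱ u) (deriv (fun u => s ϱ u) t) t :=
      (slice_snd' hs1 hϱ ht0).hasDerivAt
    have h := (hde.const_mul ϱ).sub ((hds.const_mul ϱ).const_mul Θ)
    convert h using 1
    case e'_4 => rfl
    case e'_5 => rfl
    case e'_8 => rfl
    have hg := gibbs_temp ϱ t hϱ ht0
    have hst : deriv (fun u => s ϱ u) t = deriv (fun u => e ϱ u) t / t := by
      rw [eq_div_iff ht0.ne']; linarith
    rw [hst]; field_simp
  have hmono : StrictMonoOn (fun t => ϱ * e ϱ t - Θ * (ϱ * s ϱ t)) (Set.Ici Θ) := by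
    apply strictMonoOn_of_deriv_pos (convex_Ici Θ)
    · intro t ht
      exact (hφ' t (lt_of_lt_of_le hΘ ht)).continuousAt.continuousWithinAt
    · intro t ht
      rw [interior_Ici] at ht
      have ht0 : (0:ℝ) < t := hΘ.trans ht
      rw [(hφ' t ht0).deriv]
      exact div_pos (mul_pos (mul_pos hϱ (hstab_e ϱ t hϱ ht0)) (sub_pos.mpr ht)) ht0
  have hanti : StrictAntiOn (fun t => ϱ * e ϱ t - Θ * (ϱ * s ϱ t)) (Set.Ioc 0 Θ) := by
    apply strictAntiOn_of_deriv_neg (convex_Ioc 0 Θ)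
    · intro t ht
      exact (hφ' t ht.1).continuousAt.continuousWithinAt
    · intro t ht
      rw [interior_Ioc] at ht
      rw [(hφ' t ht.1).deriv]
      exact div_neg_of_neg_of_pos
        (mul_neg_of_pos_of_neg (mul_pos hϱ (hstab_e ϱ t hϱ ht.1)) (sub_neg.mpr ht.2)) ht.1
  have hAlt : ϑ ≠ Θ →
      ϱ * e ϱ Θ - Θ * (ϱ * s ϱ Θ) < ϱ * e ϱ ϑ - Θ * (ϱ * s ϱ ϑ) := by
    intro hne
    rcases lt_or_gt_of_ne hne with h | h
    · exact hanti ⟨hϑ, h.le⟩ ⟨hΘ, le_refl Θ⟩ h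
    · exact hmono (Set.self_mem_Ici) h.le h
  have hA0 : ϱ * e ϱ Θ - Θ * (ϱ * s ϱ Θ) ≤ ϱ * e ϱ ϑ - Θ * (ϱ * s ϱ ϑ) := by
    rcases eq_or_ne ϑ Θ with h | h
    · rw [h]
    · exact (hAlt h).le
  -- Part B : density direction
  have hgD : ∀ x ∈ Set.Ioi (0:ℝ),
      HasDerivAt (fun x => x * e x Θ - Θ * (x * s x Θ))
        (e x Θ - Θ * s x Θ + p x Θ / x) x := by
    intro x hx
    have hx0 : (0:ℝ) < x := hx
    have hde : HasDerivAt (fun u => e u Θ) (deriv (fun u => e u Θ) x) x :=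
      (slice_fst' he1 hx0 hΘ).hasDerivAt
    have hds : HasDerivAt (fun u => s u Θ) (deriv (fun u => s u Θ) x) x :=
      (slice_fst' hs1 hx0 hΘ).hasDerivAt
    have h1 : HasDerivAt (fun x => x * e x Θ)
        (1 * e x Θ + x * deriv (fun u => e u Θ) x) x := (hasDerivAt_id x).mul hde
    have h2 : HasDerivAt (fun x => x * s x Θ)
        (1 * s x Θ + x * deriv (fun u => s u Θ) x) x := (hasDerivAt_id x).mul hds
    have h := h1.sub (h2.const_mul Θ)
    convert h using 1
    case e'_4 => rfl
    case e'_5 => rfl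
    case e'_8 => rfl
    have hg := gibbs_dens x Θ hx0 hΘ
    have key : Θ * (x * deriv (fun u => s u Θ) x)
        = x * deriv (fun u => e u Θ) x - p x Θ / x := by
      have : Θ * (x * deriv (fun u => s u Θ) x) = x * (Θ * deriv (fun u => s u Θ) x) := by
        ring
      rw [this, hg]; field_simp
    rw [mul_add] at *
    linarith [key]
  have hDD : ∀ x ∈ Set.Ioi (0:ℝ),
      HasDerivAt (fun x => e x Θ - Θ * s x Θ + p x Θ / x)
        (deriv (fun u => p u Θ) x / x) x := by
    intro x hx
    have hx0 : (0:ℝ) < x := hx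
    have hde : HasDerivAt (fun u => e u Θ) (deriv (fun u => e u Θ) x) x :=
      (slice_fst' he1 hx0 hΘ).hasDerivAt
    have hds : HasDerivAt (fun u => s u Θ) (deriv (fun u => s u Θ) x) x :=
      (slice_fst' hs1 hx0 hΘ).hasDerivAt
    have hdp : HasDerivAt (fun u => p u Θ) (deriv (fun u => p u Θ) x) x :=
      (slice_fst' hp hx0 hΘ).hasDerivAt
    have hdiv : HasDerivAt (fun x => p x Θ / x)
        ((deriv (fun u => p u Θ) x * x - p x Θ * 1) / x ^ 2) x :=
      hdp.div (hasDerivAt_id x) hx0.ne'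
    have h := (hde.sub (hds.const_mul Θ)).add hdiv
    convert h using 1
    case e'_4 => rfl
    case e'_5 => rfl
    case e'_8 => rfl
    have hg := gibbs_dens x Θ hx0 hΘ
    have key : deriv (fun u => e u Θ) x - Θ * deriv (fun u => s u Θ) x = p x Θ / x ^ 2 := by
      linarith
    rw [key]; field_simp; ring
  have hDmono : StrictMonoOn (fun x => e x Θ - Θ * s x Θ + p x Θ / x) (Set.Ioi 0) := by
    apply strictMonoOn_of_deriv_pos (convex_Ioi 0)
    · intro x hx
      exact (hDD x hx).continuousAt.continuousWithinAt
    · intro x hx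
      rw [interior_Ioi] at hx
      rw [(hDD x hx).deriv]
      exact div_pos (hstab_p x Θ hx hΘ) hx
  have hBlt : ϱ ≠ r →
      0 < (ϱ * e ϱ Θ - Θ * (ϱ * s ϱ Θ))
          - (e r Θ - Θ * s r Θ + p r Θ / r) * (ϱ - r)
          - (r * e r Θ - Θ * (r * s r Θ)) := by
    intro hne
    set g : ℝ → ℝ := fun x => x * e x Θ - Θ * (x * s x Θ) with hgdef
    set D : ℝ → ℝ := fun x => e x Θ - Θ * s x Θ + p x Θ / x with hDdef
    show 0 < g ϱ - D r * (ϱ - r) - g r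
    rcases lt_or_gt_of_ne hne with h | h
    · -- ϱ < r
      obtain ⟨c, hc, hc2⟩ := exists_hasDerivAt_eq_slope g D h
        (fun x hx => (hgD x (lt_of_lt_of_le hϱ hx.1)).continuousAt.continuousWithinAt)
        (fun x hx => hgD x (hϱ.trans hx.1))
      have hc0 : (0:ℝ) < c := hϱ.trans hc.1
      have hDlt : D c < D r := hDmono hc0 hr hc.2
      have hslope : D c * (r - ϱ) = g r - g ϱ := by
        rw [hc2, div_mul_cancel₀]
        exact (sub_pos.mpr h).ne'
      have hmul : D c * (r - ϱ) < D r * (r - ϱ) :=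
        mul_lt_mul_of_pos_right hDlt (sub_pos.mpr h)
      have hsign : D r * (ϱ - r) = -(D r * (r - ϱ)) := by ring
      linarith
    · -- r < ϱ
      obtain ⟨c, hc, hc2⟩ := exists_hasDerivAt_eq_slope g D h
        (fun x hx => (hgD x (lt_of_lt_of_le hr hx.1)).continuousAt.continuousWithinAt)
        (fun x hx => hgD x (hr.trans hx.1))
      have hc0 : (0:ℝ) < c := hr.trans hc.1
      have hDlt : D r < D c := hDmono hr hc0 hc.1
      have hslope : D c * (ϱ - r) = g ϱ - g r := by
        rw [hc2, div_mul_cancel₀]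
        exact (sub_pos.mpr h).ne'
      have hmul : D r * (ϱ - r) < D c * (ϱ - r) :=
        mul_lt_mul_of_pos_right hDlt (sub_pos.mpr h)
      linarith
  have hderiv : deriv (fun x => x * e x Θ - Θ * (x * s x Θ)) r
      = e r Θ - Θ * s r Θ + p r Θ / r := (hgD r hr).deriv
  rw [hderiv]
  have hB0 : 0 ≤ (ϱ * e ϱ Θ - Θ * (ϱ * s ϱ Θ))
      - (e r Θ - Θ * s r Θ + p r Θ / r) * (ϱ - r)
      - (r * e r Θ - Θ * (r * s r Θ)) := by
    rcases eq_or_ne ϱ r with h | h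
    · subst h; ring_nf; rfl
    · exact (hBlt h).le
  constructor
  · linarith
  · constructor
    · intro h0
      have h1 : ϱ = r := by
        by_contra hne
        have := hBlt hne
        linarith
      have h2 : ϑ = Θ := by
        by_contra hne
        have := hAlt hne
        linarith
      exact ⟨h1, h2⟩
    · rintro ⟨rfl, rfl⟩
      ring
end

section
/- Let p, e, s : (0,∞)² → ℝ with e and s twice continuously differentiable and p continuously differentiable, satisfying Gibbs' equation on (0,∞)², and suppose ∂_ϱ p(ϱ,ϑ) > 0 and ∂_ϑ e(ϱ,ϑ) > 0 for all ϱ, ϑ > 0. Fix 0 < ϱ̲ < ϱ̄ and 0 < ϑ̲ < ϑ̄. Then there exists a constant c > 0 such that for all (ϱ,ϑ) and (r,Θ) in the rectangle [ϱ̲,ϱ̄] × [ϑ̲,ϑ̄], the relative entropy satisfies E(ϱ,ϑ | r,Θ) ≥ c·(|ϱ − r|² + |ϑ − Θ|²). -/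
open Set

/-- Two-sided monotonicity: if `φ` has derivative `D` on `[lo,hi]`, `D ≥ 0` to the right
of `r` and `D ≤ 0` to the left of `r`, then `φ r ≤ φ x` for all `x ∈ [lo,hi]`. -/
lemma min_on_two_sided (lo hi r x : ℝ) (φ D : ℝ → ℝ)
    (hr : r ∈ Set.Icc lo hi) (hx : x ∈ Set.Icc lo hi)
    (hφ : ∀ t ∈ Set.Icc lo hi, HasDerivAt φ (D t) t)
    (h1 : ∀ t ∈ Set.Icc lo hi, r ≤ t → 0 ≤ D t)
    (h2 : ∀ t ∈ Set.Icc lo hi, t ≤ r → D t ≤ 0) : φ r ≤ φ x := by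
  rcases le_total r x with h | h
  · have hsub : Set.Icc r x ⊆ Set.Icc lo hi := Set.Icc_subset_Icc hr.1 hx.2
    have hmono : MonotoneOn φ (Set.Icc r x) := by
      apply monotoneOn_of_deriv_nonneg (convex_Icc r x)
      · exact fun t ht => (hφ t (hsub ht)).continuousAt.continuousWithinAt
      · intro t ht
        rw [interior_Icc] at ht
        exact (hφ t (hsub (Set.Ioo_subset_Icc_self ht))).differentiableAt.differentiableWithinAt
      · intro t ht
        rw [interior_Icc] at ht
        rw [(hφ t (hsub (Set.Ioo_subset_Icc_self ht))).deriv]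
        exact h1 t (hsub (Set.Ioo_subset_Icc_self ht)) ht.1.le
    exact hmono (Set.left_mem_Icc.2 h) (Set.right_mem_Icc.2 h) h
  · have hsub : Set.Icc x r ⊆ Set.Icc lo hi := Set.Icc_subset_Icc hx.1 hr.2
    have hanti : AntitoneOn φ (Set.Icc x r) := by
      apply antitoneOn_of_deriv_nonpos (convex_Icc x r)
      · exact fun t ht => (hφ t (hsub ht)).continuousAt.continuousWithinAt
      · intro t ht
        rw [interior_Icc] at ht
        exact (hφ t (hsub (Set.Ioo_subset_Icc_self ht))).differentiableAt.differentiableWithinAt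
      · intro t ht
        rw [interior_Icc] at ht
        rw [(hφ t (hsub (Set.Ioo_subset_Icc_self ht))).deriv]
        exact h2 t (hsub (Set.Ioo_subset_Icc_self ht)) ht.2.le
    exact hanti (Set.left_mem_Icc.2 h) (Set.right_mem_Icc.2 h) h

/-- Quadratic lower bound for a function whose derivative is `g t * (t - Θ)` with `g ≥ m`. -/
lemma convexity_aux (lo hi Θ ϑ m : ℝ) (f g : ℝ → ℝ)
    (hΘ : Θ ∈ Set.Icc lo hi) (hϑ : ϑ ∈ Set.Icc lo hi)
    (hf : ∀ t ∈ Set.Icc lo hi, HasDerivAt f (g t * (t - Θ)) t)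
    (hg : ∀ t ∈ Set.Icc lo hi, m ≤ g t) :
    m / 2 * (ϑ - Θ) ^ 2 ≤ f ϑ - f Θ := by
  set φ : ℝ → ℝ := fun t => f t - m / 2 * (t - Θ) ^ 2 with hφdef
  have hφ : ∀ t ∈ Set.Icc lo hi, HasDerivAt φ ((g t - m) * (t - Θ)) t := by
    intro t ht
    have h1 : HasDerivAt (fun t : ℝ => m / 2 * (t - Θ) ^ 2) (m / 2 * (2 * (t - Θ))) t := by
      have : HasDerivAt (fun t : ℝ => (t - Θ) ^ 2) (2 * (t - Θ) ^ 1 * 1) t :=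
        ((hasDerivAt_id t).sub_const Θ).pow 2
      simpa using this.const_mul (m / 2)
    have := (hf t ht).sub h1
    exact this.congr_deriv (by ring)
  have key : φ Θ ≤ φ ϑ := by
    apply min_on_two_sided lo hi Θ ϑ φ (fun t => (g t - m) * (t - Θ)) hΘ hϑ hφ
    · intro t ht hle
      exact mul_nonneg (sub_nonneg.2 (hg t ht)) (sub_nonneg.2 hle)
    · intro t ht hle
      exact mul_nonpos_of_nonneg_of_nonpos (sub_nonneg.2 (hg t ht)) (sub_nonpos.2 hle)
  have : φ Θ = f Θ := by simp [hφdef]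
  simp only [hφdef] at key
  nlinarith [key]

/-- Taylor-type lower bound: if `G' = H` and `H' = D ≥ m` on `[lo,hi]`, then
`G ϱ - G r - H r (ϱ - r) ≥ m/2 (ϱ-r)²`. -/
lemma taylor_aux (lo hi r ϱ m : ℝ) (G H D : ℝ → ℝ)
    (hr : r ∈ Set.Icc lo hi) (hϱ : ϱ ∈ Set.Icc lo hi)
    (hG : ∀ x ∈ Set.Icc lo hi, HasDerivAt G (H x) x)
    (hH : ∀ x ∈ Set.Icc lo hi, HasDerivAt H (D x) x)
    (hD : ∀ x ∈ Set.Icc lo hi, m ≤ D x) :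
    m / 2 * (ϱ - r) ^ 2 ≤ G ϱ - G r - H r * (ϱ - r) := by
  -- ψ = H - m • id is monotone on [lo,hi]
  have hψmono : MonotoneOn (fun x => H x - m * x) (Set.Icc lo hi) := by
    apply monotoneOn_of_deriv_nonneg (convex_Icc lo hi)
    · intro t ht
      have hd := (hH t ht).sub ((hasDerivAt_id t).const_mul m)
      simp only [id_eq, mul_one] at hd
      exact hd.continuousAt.continuousWithinAt
    · intro t ht
      rw [interior_Icc] at ht
      have hd := (hH t (Set.Ioo_subset_Icc_self ht)).sub ((hasDerivAt_id t).const_mul m)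
      simp only [id_eq, mul_one] at hd
      exact hd.differentiableAt.differentiableWithinAt
    · intro t ht
      rw [interior_Icc] at ht
      have ht' := Set.Ioo_subset_Icc_self ht
      have hd := (hH t ht').sub ((hasDerivAt_id t).const_mul m)
      simp only [id_eq, mul_one] at hd
      rw [show deriv (fun x => H x - m * x) t = D t - m from hd.deriv]
      linarith [hD t ht']
  set φ : ℝ → ℝ := fun x => G x - H r * x - m / 2 * (x - r) ^ 2 with hφdef
  have hφ : ∀ x ∈ Set.Icc lo hi, HasDerivAt φ (H x - H r - m * (x - r)) x := by
    intro x hx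
    have h1 : HasDerivAt (fun x : ℝ => m / 2 * (x - r) ^ 2) (m / 2 * (2 * (x - r))) x := by
      have : HasDerivAt (fun x : ℝ => (x - r) ^ 2) (2 * (x - r) ^ 1 * 1) x :=
        ((hasDerivAt_id x).sub_const r).pow 2
      simpa using this.const_mul (m / 2)
    have h2 : HasDerivAt (fun x : ℝ => H r * x) (H r) x := by
      simpa using (hasDerivAt_id x).const_mul (H r)
    have := ((hG x hx).sub h2).sub h1
    exact this.congr_deriv (by ring)
  have key : φ r ≤ φ ϱ := by
    apply min_on_two_sided lo hi r ϱ φ _ hr hϱ hφ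
    · intro t ht hle
      have := hψmono hr ht hle
      simp only at this
      linarith
    · intro t ht hle
      have := hψmono ht hr hle
      simp only at this
      linarith
  simp only [hφdef] at key
  nlinarith [key]

lemma hasDerivAt_snd_slice (f : ℝ × ℝ → ℝ) (x y : ℝ) (hf : DifferentiableAt ℝ f (x, y)) :
    HasDerivAt (fun t => f (x, t)) (fderiv ℝ f (x, y) (0, 1)) y := by
  have hline : HasDerivAt (fun t : ℝ => ((x, t) : ℝ × ℝ)) ((0 : ℝ), (1 : ℝ)) y :=
    (hasDerivAt_const y x).prodMk (hasDerivAt_id y)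
  exact hf.hasFDerivAt.comp_hasDerivAt y hline

lemma hasDerivAt_fst_slice (f : ℝ × ℝ → ℝ) (x y : ℝ) (hf : DifferentiableAt ℝ f (x, y)) :
    HasDerivAt (fun r => f (r, y)) (fderiv ℝ f (x, y) (1, 0)) x := by
  have hline : HasDerivAt (fun r : ℝ => ((r, y) : ℝ × ℝ)) ((1 : ℝ), (0 : ℝ)) x :=
    (hasDerivAt_id x).prodMk (hasDerivAt_const x y)
  exact hf.hasFDerivAt.comp_hasDerivAt x hline

lemma continuousOn_fderiv_apply {f : ℝ × ℝ → ℝ} {U : Set (ℝ × ℝ)} {n : WithTop ℕ∞} (v : ℝ × ℝ)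
    (hf : ContDiffOn ℝ n f U) (hU : IsOpen U) (hn : 1 ≤ n) :
    ContinuousOn (fun q => fderiv ℝ f q v) U := by
  have h := hf.continuousOn_fderiv_of_isOpen hU hn
  exact (ContinuousLinearMap.apply ℝ ℝ v).continuous.comp_continuousOn h


/-- Under Gibbs' equation (with `e, s` twice continuously
differentiable and `p` continuously differentiable) and thermodynamic stability
(`∂_ϱ p > 0`, `∂_ϑ e > 0`), for any rectangle `[ϱ̲,ϱ̄] × [ϑ̲,ϑ̄] ⊂ (0,∞)²` there
is a constant `c > 0` such that the relative entropy
`E(ϱ,ϑ | r,Θ) = H_Θ(ϱ,ϑ) − ∂_ϱ H_Θ(r,Θ)·(ϱ − r) − H_Θ(r,Θ)` satisfies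
`E(ϱ,ϑ | r,Θ) ≥ c·(|ϱ − r|² + |ϑ − Θ|²)` whenever `(ϱ,ϑ)` and `(r,Θ)` lie in the
rectangle. -/
theorem relative_entropy_coercive_essential_part
    (p e s : ℝ → ℝ → ℝ)
    (hp : ContDiffOn ℝ 1 (fun q : ℝ × ℝ => p q.1 q.2)
      (Set.Ioi (0 : ℝ) ×ˢ Set.Ioi (0 : ℝ)))
    (he : ContDiffOn ℝ 2 (fun q : ℝ × ℝ => e q.1 q.2)
      (Set.Ioi (0 : ℝ) ×ˢ Set.Ioi (0 : ℝ)))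
    (hs : ContDiffOn ℝ 2 (fun q : ℝ × ℝ => s q.1 q.2)
      (Set.Ioi (0 : ℝ) ×ˢ Set.Ioi (0 : ℝ)))
    (gibbs_temp : ∀ ϱ ϑ : ℝ, 0 < ϱ → 0 < ϑ →
      ϑ * deriv (fun t => s ϱ t) ϑ = deriv (fun t => e ϱ t) ϑ)
    (gibbs_dens : ∀ ϱ ϑ : ℝ, 0 < ϱ → 0 < ϑ →
      ϑ * deriv (fun r => s r ϑ) ϱ
        = deriv (fun r => e r ϑ) ϱ - p ϱ ϑ / ϱ ^ 2)
    (hstab_p : ∀ ϱ ϑ : ℝ, 0 < ϱ → 0 < ϑ → 0 < deriv (fun r => p r ϑ) ϱ)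
    (hstab_e : ∀ ϱ ϑ : ℝ, 0 < ϱ → 0 < ϑ → 0 < deriv (fun t => e ϱ t) ϑ)
    (ϱlo ϱhi ϑlo ϑhi : ℝ)
    (hϱlo : 0 < ϱlo) (hϱ : ϱlo < ϱhi) (hϑlo : 0 < ϑlo) (hϑ : ϑlo < ϑhi) :
    ∃ c : ℝ, 0 < c ∧
      ∀ ϱ ϑ r Θ : ℝ,
        ϱ ∈ Set.Icc ϱlo ϱhi → ϑ ∈ Set.Icc ϑlo ϑhi →
        r ∈ Set.Icc ϱlo ϱhi → Θ ∈ Set.Icc ϑlo ϑhi →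
        c * (|ϱ - r| ^ 2 + |ϑ - Θ| ^ 2)
          ≤ (ϱ * e ϱ ϑ - Θ * (ϱ * s ϱ ϑ))
            - deriv (fun x => x * e x Θ - Θ * (x * s x Θ)) r * (ϱ - r)
            - (r * e r Θ - Θ * (r * s r Θ)) := by
  classical
  set U : Set (ℝ × ℝ) := Set.Ioi (0 : ℝ) ×ˢ Set.Ioi (0 : ℝ) with hUdef
  have hUopen : IsOpen U := (isOpen_Ioi).prod (isOpen_Ioi)
  have hmemU : ∀ x y : ℝ, 0 < x → 0 < y → ((x, y) : ℝ × ℝ) ∈ U := by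
    intro x y hx hy; exact ⟨hx, hy⟩
  set E2 : ℝ × ℝ → ℝ := fun q => e q.1 q.2 with hE2def
  set S2 : ℝ × ℝ → ℝ := fun q => s q.1 q.2 with hS2def
  set P2 : ℝ × ℝ → ℝ := fun q => p q.1 q.2 with hP2def
  have hEdiff : ∀ x y : ℝ, 0 < x → 0 < y → DifferentiableAt ℝ E2 (x, y) := fun x y hx hy =>
    (he.differentiableOn (by norm_num)).differentiableAt
      (hUopen.mem_nhds (hmemU x y hx hy))
  have hSdiff : ∀ x y : ℝ, 0 < x → 0 < y → DifferentiableAt ℝ S2 (x, y) := fun x y hx hy =>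
    (hs.differentiableOn (by norm_num)).differentiableAt
      (hUopen.mem_nhds (hmemU x y hx hy))
  have hPdiff : ∀ x y : ℝ, 0 < x → 0 < y → DifferentiableAt ℝ P2 (x, y) := fun x y hx hy =>
    (hp.differentiableOn one_ne_zero).differentiableAt (hUopen.mem_nhds (hmemU x y hx hy))
  -- partial derivatives
  set eϑ : ℝ → ℝ → ℝ := fun x y => fderiv ℝ E2 (x, y) (0, 1) with heϑdef
  set sϑ : ℝ → ℝ → ℝ := fun x y => fderiv ℝ S2 (x, y) (0, 1) with hsϑdef
  set eϱ : ℝ → ℝ → ℝ := fun x y => fderiv ℝ E2 (x, y) (1, 0) with heϱdef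
  set sϱ : ℝ → ℝ → ℝ := fun x y => fderiv ℝ S2 (x, y) (1, 0) with hsϱdef
  set pϱ : ℝ → ℝ → ℝ := fun x y => fderiv ℝ P2 (x, y) (1, 0) with hpϱdef
  have hEϑ : ∀ x y : ℝ, 0 < x → 0 < y → HasDerivAt (fun t => e x t) (eϑ x y) y :=
    fun x y hx hy => hasDerivAt_snd_slice E2 x y (hEdiff x y hx hy)
  have hSϑ : ∀ x y : ℝ, 0 < x → 0 < y → HasDerivAt (fun t => s x t) (sϑ x y) y :=
    fun x y hx hy => hasDerivAt_snd_slice S2 x y (hSdiff x y hx hy)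
  have hEϱ : ∀ x y : ℝ, 0 < x → 0 < y → HasDerivAt (fun r => e r y) (eϱ x y) x :=
    fun x y hx hy => hasDerivAt_fst_slice E2 x y (hEdiff x y hx hy)
  have hSϱ : ∀ x y : ℝ, 0 < x → 0 < y → HasDerivAt (fun r => s r y) (sϱ x y) x :=
    fun x y hx hy => hasDerivAt_fst_slice S2 x y (hSdiff x y hx hy)
  have hPϱ : ∀ x y : ℝ, 0 < x → 0 < y → HasDerivAt (fun r => p r y) (pϱ x y) x :=
    fun x y hx hy => hasDerivAt_fst_slice P2 x y (hPdiff x y hx hy)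
  -- Gibbs relations in terms of partial derivatives
  have gibbsT : ∀ x y : ℝ, 0 < x → 0 < y → y * sϑ x y = eϑ x y := by
    intro x y hx hy
    have := gibbs_temp x y hx hy
    rwa [(hSϑ x y hx hy).deriv, (hEϑ x y hx hy).deriv] at this
  have gibbsD : ∀ x y : ℝ, 0 < x → 0 < y → y * sϱ x y = eϱ x y - p x y / x ^ 2 := by
    intro x y hx hy
    have := gibbs_dens x y hx hy
    rwa [(hSϱ x y hx hy).deriv, (hEϱ x y hx hy).deriv] at this
  have stabE : ∀ x y : ℝ, 0 < x → 0 < y → 0 < eϑ x y := by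
    intro x y hx hy
    have := hstab_e x y hx hy
    rwa [(hEϑ x y hx hy).deriv] at this
  have stabP : ∀ x y : ℝ, 0 < x → 0 < y → 0 < pϱ x y := by
    intro x y hx hy
    have := hstab_p x y hx hy
    rwa [(hPϱ x y hx hy).deriv] at this
  -- compact rectangle
  set K : Set (ℝ × ℝ) := Set.Icc ϱlo ϱhi ×ˢ Set.Icc ϑlo ϑhi with hKdef
  have hKU : K ⊆ U := by
    rintro ⟨x, y⟩ ⟨hx, hy⟩
    exact ⟨lt_of_lt_of_le hϱlo hx.1, lt_of_lt_of_le hϑlo hy.1⟩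
  have hKcomp : IsCompact K := isCompact_Icc.prod isCompact_Icc
  have hKne : K.Nonempty := ⟨(ϱlo, ϑlo), ⟨Set.left_mem_Icc.2 hϱ.le, Set.left_mem_Icc.2 hϑ.le⟩⟩
  have hposK : ∀ q ∈ K, (0 : ℝ) < q.1 ∧ (0 : ℝ) < q.2 := by
    intro q hq; exact ⟨(hKU hq).1, (hKU hq).2⟩
  -- the two coefficient functions and their minima
  have hc1cont : ContinuousOn (fun q : ℝ × ℝ => q.1 * eϑ q.1 q.2 / q.2) K := by
    apply ContinuousOn.div
    · exact (continuousOn_fst.mul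
        ((continuousOn_fderiv_apply (0, 1) he hUopen (by exact_mod_cast one_le_two)).mono hKU))
    · exact continuousOn_snd
    · intro q hq; exact ne_of_gt (hposK q hq).2
  have hc2cont : ContinuousOn (fun q : ℝ × ℝ => pϱ q.1 q.2 / q.1) K := by
    apply ContinuousOn.div
    · exact (continuousOn_fderiv_apply (1, 0) hp hUopen le_rfl).mono hKU
    · exact continuousOn_fst
    · intro q hq; exact ne_of_gt (hposK q hq).1
  obtain ⟨q1, hq1K, hq1min⟩ := hKcomp.exists_isMinOn hKne hc1cont
  obtain ⟨q2, hq2K, hq2min⟩ := hKcomp.exists_isMinOn hKne hc2cont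
  set m₁ : ℝ := q1.1 * eϑ q1.1 q1.2 / q1.2 with hm₁def
  set m₂ : ℝ := pϱ q2.1 q2.2 / q2.1 with hm₂def
  have hm₁pos : 0 < m₁ :=
    div_pos (mul_pos (hposK q1 hq1K).1 (stabE q1.1 q1.2 (hposK q1 hq1K).1 (hposK q1 hq1K).2))
      (hposK q1 hq1K).2
  have hm₂pos : 0 < m₂ :=
    div_pos (stabP q2.1 q2.2 (hposK q2 hq2K).1 (hposK q2 hq2K).2) (hposK q2 hq2K).1
  have hm₁le : ∀ q ∈ K, m₁ ≤ q.1 * eϑ q.1 q.2 / q.2 := fun q hq => hq1min hq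
  have hm₂le : ∀ q ∈ K, m₂ ≤ pϱ q.1 q.2 / q.1 := fun q hq => hq2min hq
  refine ⟨min m₁ m₂ / 2, by positivity, ?_⟩
  intro ϱ ϑ r Θ hϱm hϑm hrm hΘm
  have hϱpos : 0 < ϱ := lt_of_lt_of_le hϱlo hϱm.1
  have hrpos : 0 < r := lt_of_lt_of_le hϱlo hrm.1
  have hϑpos : 0 < ϑ := lt_of_lt_of_le hϑlo hϑm.1
  have hΘpos : 0 < Θ := lt_of_lt_of_le hϑlo hΘm.1
  -- Part 1 : temperature direction
  have part1 : m₁ / 2 * (ϑ - Θ) ^ 2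
      ≤ (ϱ * e ϱ ϑ - Θ * (ϱ * s ϱ ϑ)) - (ϱ * e ϱ Θ - Θ * (ϱ * s ϱ Θ)) := by
    apply convexity_aux ϑlo ϑhi Θ ϑ m₁ (fun t => ϱ * e ϱ t - Θ * (ϱ * s ϱ t))
      (fun t => ϱ * eϑ ϱ t / t) hΘm hϑm
    · intro t ht
      have htpos : 0 < t := lt_of_lt_of_le hϑlo ht.1
      have h1 := ((hEϑ ϱ t hϱpos htpos).const_mul ϱ).sub
        (((hSϑ ϱ t hϱpos htpos).const_mul ϱ).const_mul Θ)
      have heq : ϱ * eϑ ϱ t - Θ * (ϱ * sϑ ϱ t) = ϱ * eϑ ϱ t / t * (t - Θ) := by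
        have hg := gibbsT ϱ t hϱpos htpos
        field_simp
        linear_combination (-Θ) * hg
      rw [heq] at h1
      exact h1
    · intro t ht
      have := hm₁le (ϱ, t) ⟨hϱm, ht⟩
      simpa using this
  -- Part 2 : density direction
  set H : ℝ → ℝ := fun x => e x Θ - Θ * s x Θ + p x Θ / x with hHdef
  have hG : ∀ x ∈ Set.Icc ϱlo ϱhi,
      HasDerivAt (fun x => x * e x Θ - Θ * (x * s x Θ)) (H x) x := by
    intro x hx
    have hxpos : 0 < x := lt_of_lt_of_le hϱlo hx.1
    have h1 : HasDerivAt (fun x => x * e x Θ) (1 * e x Θ + x * eϱ x Θ) x :=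
      (hasDerivAt_id x).mul (hEϱ x Θ hxpos hΘpos)
    have h2 : HasDerivAt (fun x => x * s x Θ) (1 * s x Θ + x * sϱ x Θ) x :=
      (hasDerivAt_id x).mul (hSϱ x Θ hxpos hΘpos)
    have h3 := h1.sub (h2.const_mul Θ)
    have heq : 1 * e x Θ + x * eϱ x Θ - Θ * (1 * s x Θ + x * sϱ x Θ) = H x := by
      have hg := gibbsD x Θ hxpos hΘpos
      have hg' : Θ * sϱ x Θ * x ^ 2 = eϱ x Θ * x ^ 2 - p x Θ := by
        rw [hg]; field_simp
      simp only [hHdef]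
      field_simp
      linear_combination -hg'
    rw [heq] at h3
    exact h3
  have hHd : ∀ x ∈ Set.Icc ϱlo ϱhi, HasDerivAt H (pϱ x Θ / x) x := by
    intro x hx
    have hxpos : 0 < x := lt_of_lt_of_le hϱlo hx.1
    have h1 : HasDerivAt (fun x => p x Θ / x)
        ((pϱ x Θ * x - p x Θ * 1) / x ^ 2) x :=
      (hPϱ x Θ hxpos hΘpos).div (hasDerivAt_id x) (ne_of_gt hxpos)
    have h2 := ((hEϱ x Θ hxpos hΘpos).sub ((hSϱ x Θ hxpos hΘpos).const_mul Θ)).add h1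
    have heq : eϱ x Θ - Θ * sϱ x Θ + (pϱ x Θ * x - p x Θ * 1) / x ^ 2 = pϱ x Θ / x := by
      have hg := gibbsD x Θ hxpos hΘpos
      have hg' : Θ * sϱ x Θ * x ^ 2 = eϱ x Θ * x ^ 2 - p x Θ := by
        rw [hg]; field_simp
      field_simp
      linear_combination (-1) * hg'
    rw [heq] at h2
    exact h2
  have hderivG : deriv (fun x => x * e x Θ - Θ * (x * s x Θ)) r = H r := (hG r hrm).deriv
  have part2 : m₂ / 2 * (ϱ - r) ^ 2
      ≤ (ϱ * e ϱ Θ - Θ * (ϱ * s ϱ Θ)) - (r * e r Θ - Θ * (r * s r Θ)) - H r * (ϱ - r) := by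
    apply taylor_aux ϱlo ϱhi r ϱ m₂ _ H (fun x => pϱ x Θ / x) hrm hϱm hG hHd
    intro x hx
    have := hm₂le (x, Θ) ⟨hx, hΘm⟩
    simpa using this
  rw [hderivG, sq_abs, sq_abs]
  have hcm1 : min m₁ m₂ ≤ m₁ := min_le_left _ _
  have hcm2 : min m₁ m₂ ≤ m₂ := min_le_right _ _
  nlinarith [part1, part2, sq_nonneg (ϱ - r), sq_nonneg (ϑ - Θ)]
end

section
/- Let a > 0 and let P : (0,∞) → ℝ be differentiable with (5/3)·P(Z) − P'(Z)·Z > 0 for all Z > 0 and P(Z)/Z^{5/3} → P_∞ > 0 as Z → ∞. Define e(ϱ,ϑ) = (3/2)·(ϑ^{5/2}/ϱ)·P(ϱ·ϑ^{−3/2}) + a·ϑ⁴/ϱ. Then for all ϱ, ϑ > 0, ϱ·e(ϱ,ϑ) ≥ min{(3/2)·P_∞, a}·(ϱ^{5/3} + ϑ⁴). -/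
lemma quot_antitone_key
    (P P' : ℝ → ℝ)
    (hP : ∀ Z : ℝ, 0 < Z → HasDerivAt P (P' Z) Z)
    (hm4 : ∀ Z : ℝ, 0 < Z → 0 < (5 / 3) * P Z - P' Z * Z)
    (Pinf : ℝ)
    (hlim : Filter.Tendsto (fun Z : ℝ => P Z / Z ^ ((5 : ℝ) / 3))
      Filter.atTop (nhds Pinf)) :
    ∀ Z : ℝ, 0 < Z → Pinf * Z ^ ((5 : ℝ) / 3) ≤ P Z := by
  set g : ℝ → ℝ := fun Z => P Z / Z ^ ((5 : ℝ) / 3) with hg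
  have hgd : ∀ Z : ℝ, 0 < Z → HasDerivAt g
      ((P' Z * Z ^ ((5 : ℝ) / 3) - P Z * ((5 / 3) * Z ^ ((5 : ℝ) / 3 - 1)))
        / (Z ^ ((5 : ℝ) / 3)) ^ 2) Z := by
    intro Z hZ
    exact (hP Z hZ).div (Real.hasDerivAt_rpow_const (Or.inl hZ.ne'))
      (Real.rpow_pos_of_pos hZ _).ne'
  have hneg : ∀ Z : ℝ, 0 < Z →
      (P' Z * Z ^ ((5 : ℝ) / 3) - P Z * ((5 / 3) * Z ^ ((5 : ℝ) / 3 - 1)))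
        / (Z ^ ((5 : ℝ) / 3)) ^ 2 < 0 := by
    intro Z hZ
    apply div_neg_of_neg_of_pos
    · have h1 : Z ^ ((5 : ℝ) / 3) = Z ^ ((5 : ℝ) / 3 - 1) * Z := by
        rw [show ((5 : ℝ) / 3) = ((5 : ℝ) / 3 - 1) + 1 by ring,
          Real.rpow_add_one hZ.ne']
        ring_nf
      rw [h1]
      have h2 := hm4 Z hZ
      have h3 : (0 : ℝ) < Z ^ ((5 : ℝ) / 3 - 1) := Real.rpow_pos_of_pos hZ _
      nlinarith [mul_pos h3 h2]
    · positivity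
  have hanti : StrictAntiOn g (Set.Ioi 0) := by
    apply strictAntiOn_of_deriv_neg (convex_Ioi 0)
    · intro x hx
      exact ((hgd x hx).continuousAt).continuousWithinAt
    · intro x hx
      rw [interior_Ioi] at hx
      rw [(hgd x hx).deriv]
      exact hneg x hx
  have hge : ∀ Z : ℝ, 0 < Z → Pinf ≤ g Z := by
    intro Z hZ
    refine le_of_tendsto hlim ?_
    filter_upwards [Filter.eventually_gt_atTop Z] with x hx
    exact (hanti hZ (lt_trans hZ hx) hx).le
  intro Z hZ
  have := hge Z hZ
  rw [hg] at this
  have hp : (0 : ℝ) < Z ^ ((5 : ℝ) / 3) := Real.rpow_pos_of_pos hZ _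
  calc Pinf * Z ^ ((5 : ℝ) / 3) ≤ (P Z / Z ^ ((5 : ℝ) / 3)) * Z ^ ((5 : ℝ) / 3) := by
        exact mul_le_mul_of_nonneg_right this hp.le
    _ = P Z := div_mul_cancel₀ _ hp.ne'

/-- With `a > 0`, `P` differentiable, `(5/3)·P(Z) − P'(Z)·Z > 0`
for all `Z > 0`, and `P(Z)/Z^(5/3) → P_∞ > 0` as `Z → ∞`, the internal energy
`e(ϱ,ϑ) = (3/2)·(ϑ^(5/2)/ϱ)·P(ϱ·ϑ^(−3/2)) + a·ϑ⁴/ϱ` satisfies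
`ϱ·e(ϱ,ϑ) ≥ min{(3/2)·P_∞, a}·(ϱ^(5/3) + ϑ⁴)` for all `ϱ, ϑ > 0`. -/
theorem internal_energy_coercivity
    (a : ℝ) (ha : 0 < a)
    (P P' : ℝ → ℝ)
    (hP : ∀ Z : ℝ, 0 < Z → HasDerivAt P (P' Z) Z)
    (hm4 : ∀ Z : ℝ, 0 < Z → 0 < (5 / 3) * P Z - P' Z * Z)
    (Pinf : ℝ) (hPinf : 0 < Pinf)
    (hlim : Filter.Tendsto (fun Z : ℝ => P Z / Z ^ ((5 : ℝ) / 3))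
      Filter.atTop (nhds Pinf))
    (e : ℝ → ℝ → ℝ)
    (he : ∀ ϱ ϑ : ℝ, 0 < ϱ → 0 < ϑ →
      e ϱ ϑ = (3 / 2) * (ϑ ^ ((5 : ℝ) / 2) / ϱ) * P (ϱ * ϑ ^ (-(3 : ℝ) / 2))
        + a * ϑ ^ 4 / ϱ) :
    ∀ ϱ ϑ : ℝ, 0 < ϱ → 0 < ϑ →
      min ((3 / 2) * Pinf) a * (ϱ ^ ((5 : ℝ) / 3) + ϑ ^ 4) ≤ ϱ * e ϱ ϑ := by
  intro ϱ ϑ hϱ hϑ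
  have hkey := quot_antitone_key P P' hP hm4 Pinf hlim
  set Z : ℝ := ϱ * ϑ ^ (-(3 : ℝ) / 2) with hZdef
  have hZ : 0 < Z := mul_pos hϱ (Real.rpow_pos_of_pos hϑ _)
  have hPZ : Pinf * Z ^ ((5 : ℝ) / 3) ≤ P Z := hkey Z hZ
  have hZ53 : ϑ ^ ((5 : ℝ) / 2) * Z ^ ((5 : ℝ) / 3) = ϱ ^ ((5 : ℝ) / 3) := by
    rw [hZdef, Real.mul_rpow hϱ.le (Real.rpow_pos_of_pos hϑ _).le,
      ← Real.rpow_mul hϑ.le]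
    have hone : ϑ ^ ((5 : ℝ) / 2) * ϑ ^ (-(3 : ℝ) / 2 * ((5 : ℝ) / 3)) = 1 := by
      rw [← Real.rpow_add hϑ]
      norm_num
    calc ϑ ^ ((5 : ℝ) / 2) * (ϱ ^ ((5 : ℝ) / 3) * ϑ ^ (-(3 : ℝ) / 2 * ((5 : ℝ) / 3)))
        = ϱ ^ ((5 : ℝ) / 3) * (ϑ ^ ((5 : ℝ) / 2) * ϑ ^ (-(3 : ℝ) / 2 * ((5 : ℝ) / 3))) := by
          ring
      _ = ϱ ^ ((5 : ℝ) / 3) := by rw [hone, mul_one]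
  have hee : ϱ * e ϱ ϑ = (3 / 2) * (ϑ ^ ((5 : ℝ) / 2) * P Z) + a * ϑ ^ 4 := by
    rw [he ϱ ϑ hϱ hϑ]
    rw [← hZdef]
    field_simp
  rw [hee]
  have hϑ52 : (0 : ℝ) < ϑ ^ ((5 : ℝ) / 2) := Real.rpow_pos_of_pos hϑ _
  have h1 : (3 / 2 : ℝ) * Pinf * ϱ ^ ((5 : ℝ) / 3) ≤ (3 / 2) * (ϑ ^ ((5 : ℝ) / 2) * P Z) := by
    have := mul_le_mul_of_nonneg_left hPZ hϑ52.le
    nlinarith [this, hZ53]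
  have hmin1 : min ((3 / 2) * Pinf) a ≤ (3 / 2) * Pinf := min_le_left _ _
  have hmin2 : min ((3 / 2) * Pinf) a ≤ a := min_le_right _ _
  have hϱ53 : (0 : ℝ) < ϱ ^ ((5 : ℝ) / 3) := Real.rpow_pos_of_pos hϱ _
  have hϑ4 : (0 : ℝ) < ϑ ^ 4 := by positivity
  nlinarith [mul_le_mul_of_nonneg_right hmin1 hϱ53.le,
    mul_le_mul_of_nonneg_right hmin2 hϑ4.le]
end
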